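/- Let T[1..n] be a string, let T^R denote its reverse, and let P[1..m] (m ≥ 1) occur in T. If s is the largest position with T[s..s+m−1] = P (the rightmost occurrence of P in T), then the corresponding occurrence of the reversed pattern P^R in T^R, which starts at position n − (s+m−1) + 1, is the leftmost occurrence of P^R in T^R, and it touches a phrase boundary of the LZ77 parse of T^R: there is a phrase-end position q' of the LZ77 parse of T^R with n − s − m + 2 ≤ q' ≤ n − s + 1. -/

import Mathlib

namespace RStarIndex

variable {α : Type*}

/-- The substring of `T` of length `len` starting at 0-based position `s`,
    i.e. `T[s..s+len-1]` in 1-based notation `T[s+1..s+len]`. -/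
def Slice (T : List α) (s len : ℕ) : List α := (T.drop s).take len

/-- `U` occurs in `T` at 0-based position `s`, i.e. `T[s..s+|U|-1] = U`. -/
def OccursAt (T U : List α) (s : ℕ) : Prop :=
  s + U.length ≤ T.length ∧ Slice T s U.length = U

/-- `ph` is the LZ77 parse of `T`: a nonempty list of phrases, each given by its
    (start, end) pair of 0-based inclusive positions.  The first phrase starts at
    position `0`, consecutive phrases are adjacent, the last phrase ends at the last
    position of `T`, and each phrase consists of the longest prefix of the remaining
    text that occurs starting at some strictly earlier position (possibly the empty
    prefix, and capped so that one additional explicit character fits) followed by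
    one additional character. -/
def IsLZ77Parse (T : List α) (ph : List (ℕ × ℕ)) : Prop :=
  0 < ph.length ∧
  (∀ (j : ℕ) (h : j < ph.length), ph[j].1 ≤ ph[j].2 ∧ ph[j].2 < T.length) ∧
  (∀ (h : 0 < ph.length), ph[0].1 = 0) ∧
  (∀ (h : ph.length - 1 < ph.length), ph[ph.length - 1].2 + 1 = T.length) ∧
  (∀ (j : ℕ) (h : j + 1 < ph.length), ph[j + 1].1 = (ph[j]'(by omega)).2 + 1) ∧
  (∀ (j : ℕ) (h : j < ph.length),
    ph[j].1 = ph[j].2 ∨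
      ∃ x < ph[j].1, OccursAt T (Slice T ph[j].1 (ph[j].2 - ph[j].1)) x) ∧
  (∀ (j : ℕ) (h : j < ph.length), ph[j].2 + 1 < T.length →
    ¬ ∃ x < ph[j].1, OccursAt T (Slice T ph[j].1 (ph[j].2 - ph[j].1 + 1)) x)

/-- The occurrence of a length-`m` pattern at position `s` touches a phrase boundary
    of the parse `ph`: some phrase-end position `q_j` satisfies `s ≤ q_j ≤ s+m-1`. -/
def TouchesBoundary (ph : List (ℕ × ℕ)) (s m : ℕ) : Prop :=
  ∃ (j : ℕ) (h : j < ph.length), s ≤ ph[j].2 ∧ ph[j].2 < s + m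



lemma slice_reverse (T : List α) (s m : ℕ) (h : s + m ≤ T.length) :
    Slice T.reverse (T.length - s - m) m = (Slice T s m).reverse := by
  unfold Slice
  have h1 : T.reverse.drop (T.length - s - m) = (T.take (s + m)).reverse := by
    rw [List.reverse_take]; congr 1; omega
  rw [h1]
  have h2 : (T.take (s + m)).length = s + m := by rw [List.length_take]; omega
  rw [show ((T.take (s+m)).reverse.take m) = ((T.take (s+m)).drop s).reverse by
    rw [List.reverse_drop, h2]; congr 1; omega]
  rw [List.drop_take]
  congr 2
  omega

lemma occursAt_reverse {T U : List α} {s : ℕ} (h : OccursAt T U s) :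
    OccursAt T.reverse U.reverse (T.length - s - U.length) := by
  obtain ⟨h1, h2⟩ := h
  refine ⟨by simp; omega, ?_⟩
  rw [List.length_reverse, slice_reverse T s U.length h1, h2]

lemma occursAt_of_reverse {T U : List α} {s : ℕ} (h : OccursAt T.reverse U.reverse s) :
    OccursAt T U (T.length - s - U.length) := by
  have := occursAt_reverse h
  simpa using this

lemma slice_length {T : List α} {s m : ℕ} (h : s + m ≤ T.length) :
    (Slice T s m).length = m := by
  unfold Slice
  rw [List.length_take, List.length_drop]
  omega

lemma slice_slice {T : List α} (p L a m : ℕ) (ham : a + m ≤ L) :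
    Slice (Slice T p L) a m = Slice T (p + a) m := by
  unfold Slice
  rw [List.drop_take, List.drop_drop, List.take_take]
  congr 1 <;> omega

lemma occursAt_slice {T W : List α} {x : ℕ} (h : OccursAt T W x) (a m : ℕ)
    (ham : a + m ≤ W.length) : OccursAt T (Slice W a m) (x + a) := by
  obtain ⟨h1, h2⟩ := h
  have hlen : (Slice W a m).length = m := slice_length (by omega)
  refine ⟨by rw [hlen]; omega, ?_⟩
  rw [hlen]
  unfold Slice at h2 ⊢
  rw [← h2, List.drop_take, List.drop_drop, List.take_take]
  congr 1 <;> omega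

lemma phrase_cover {T : List α} {ph : List (ℕ × ℕ)} (hph : IsLZ77Parse T ph)
    (i : ℕ) (hi : i < T.length) :
    ∃ (j : ℕ) (h : j < ph.length), ph[j].1 ≤ i ∧ i ≤ ph[j].2 := by
  obtain ⟨hpos, _, h0, hlast, hadj, _, _⟩ := hph
  have key : ∀ j (h : j < ph.length), i ≤ ph[j].2 →
      ∃ (j' : ℕ) (h' : j' < ph.length), ph[j'].1 ≤ i ∧ i ≤ ph[j'].2 := by
    intro j
    induction j with
    | zero => intro h hle; exact ⟨0, h, by rw [h0 h]; omega, hle⟩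
    | succ j ih =>
      intro h hle
      by_cases hc : ph[j+1].1 ≤ i
      · exact ⟨j+1, h, hc, hle⟩
      · have hj := hadj j h
        exact ih (by omega) (by omega)
  have hl : ph.length - 1 < ph.length := by omega
  exact key (ph.length - 1) hl (by have := hlast hl; omega)

/-- If `s` is the rightmost occurrence of a nonempty pattern `P` in
`T`, then the corresponding occurrence of `P.reverse` in `T.reverse` (starting, in
0-based terms, at position `|T| - s - |P|`) is the leftmost occurrence of `P.reverse`
in `T.reverse`, and it touches a phrase boundary of the LZ77 parse of `T.reverse`. -/
theorem rightmost_occurrence_reverse_touches_boundary [Fintype α]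
    (T : List α) (hT : T ≠ []) (ph : List (ℕ × ℕ)) (hph : IsLZ77Parse T.reverse ph)
    (P : List α) (hm : 1 ≤ P.length) (s : ℕ) (hocc : OccursAt T P s)
    (hmax : ∀ s', OccursAt T P s' → s' ≤ s) :
    OccursAt T.reverse P.reverse (T.length - s - P.length) ∧
    (∀ s', OccursAt T.reverse P.reverse s' → T.length - s - P.length ≤ s') ∧
    ∃ (j : ℕ) (h : j < ph.length),
      T.length - s - P.length ≤ ph[j].2 ∧ ph[j].2 < T.length - s := by
  obtain ⟨hlen1, hslice1⟩ := hocc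
  set n := T.length with hn
  set m := P.length with hmP
  have hsm : s + m ≤ n := hlen1
  have occ1 : OccursAt T.reverse P.reverse (n - s - m) := occursAt_reverse ⟨hlen1, hslice1⟩
  have hmin : ∀ s', OccursAt T.reverse P.reverse s' → n - s - m ≤ s' := by
    intro s' h
    have h2 := occursAt_of_reverse h
    have h3 := hmax _ h2
    have hb : s' + m ≤ n := by simpa using h.1
    omega
  refine ⟨occ1, hmin, ?_⟩
  by_contra hcon
  push_neg at hcon
  set s' := n - s - m with hs'
  have hs'm : s' + m = n - s := by omega
  have hs'n : s' < n := by omega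
  have hnrev : T.reverse.length = n := by simp [hn]
  obtain ⟨j, hj, hp1, hp2⟩ := phrase_cover hph s' (by omega : s' < T.reverse.length)
  obtain ⟨_, hbnd, _, _, _, hcopy, _⟩ := hph
  have hq := (hbnd j hj).2
  have hqm : s' + m ≤ ph[j].2 := by
    have := hcon j hj
    omega
  have hne : ph[j].1 < ph[j].2 := by omega
  rcases hcopy j hj with heq | ⟨x, hx, hoccx⟩
  · omega
  · set p := ph[j].1 with hp
    set L := ph[j].2 - p with hL
    have hWlen : (Slice T.reverse p L).length = L := by
      apply slice_length
      rw [hnrev]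
      omega
    have ham : (s' - p) + m ≤ L := by omega
    have hocc2 := occursAt_slice hoccx (s' - p) m (by omega)
    rw [slice_slice p L (s' - p) m ham] at hocc2
    have hps : p + (s' - p) = s' := by omega
    rw [hps] at hocc2
    have hPrev : Slice T.reverse s' m = P.reverse := by
      have := occ1.2
      simpa using this
    rw [hPrev] at hocc2
    have := hmin _ hocc2
    omega


end RStarIndex
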